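/- For the LCG x_{k+1} = a·x_k + c over ZMod (2^m) with a ≡ 1 (mod 4) and c odd, the sequence x_0, x_1, x_2, … has period exactly 2^m (it is a full-period generator, visiting every residue modulo 2^m). -/

import Mathlib

lemma geomsum_mod_two (a T : ℕ) (ha : a % 2 = 1) :
    (∑ i ∈ Finset.range T, a ^ i) % 2 = T % 2 := by
  induction T with
  | zero => simp
  | succ n ih =>
    rw [Finset.sum_range_succ, Nat.add_mod, ih, Nat.pow_mod, ha, one_pow]
    omega

lemma key (a : ℕ) (ha : a % 4 = 1) :
    ∀ m T, 2 ^ m ∣ ∑ i ∈ Finset.range T, a ^ i ↔ 2 ^ m ∣ T := by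
  intro m
  induction m with
  | zero => simp
  | succ m ih =>
    intro T
    have ha2 : a % 2 = 1 := by omega
    rcases Nat.even_or_odd T with he | ho
    · obtain ⟨t, rfl⟩ := he
      have hsplit : (∑ i ∈ Finset.range (t + t), a ^ i)
          = (∑ i ∈ Finset.range t, a ^ i) * (1 + a ^ t) := by
        rw [Finset.sum_range_add]
        simp only [pow_add]
        rw [← Finset.mul_sum]
        ring
      have hat : a ^ t % 4 = 1 := by
        rw [Nat.pow_mod, ha, one_pow]; rfl
      obtain ⟨u, huu, hodd⟩ : ∃ u, 1 + a ^ t = 2 * u ∧ u % 2 = 1 :=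
        ⟨(1 + a ^ t) / 2, by omega, by omega⟩
      rw [hsplit, huu]
      constructor
      · intro h
        rw [pow_succ, show (∑ i ∈ Finset.range t, a ^ i) * (2 * u)
            = ((∑ i ∈ Finset.range t, a ^ i) * u) * 2 by ring] at h
        have h2 : 2 ^ m ∣ (∑ i ∈ Finset.range t, a ^ i) * u :=
          (Nat.mul_dvd_mul_iff_right (by norm_num : (0:ℕ) < 2)).mp h
        have hcop : Nat.Coprime (2 ^ m) u :=
          Nat.Coprime.pow_left _ (Nat.coprime_two_left.mpr (Nat.odd_iff.mpr hodd))
        have h3 : 2 ^ m ∣ ∑ i ∈ Finset.range t, a ^ i :=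
          hcop.dvd_of_dvd_mul_right h2
        obtain ⟨s, hs⟩ := (ih t).mp h3
        exact ⟨s, by rw [pow_succ, hs]; ring⟩
      · intro h
        have ht : 2 ^ m ∣ t := by
          obtain ⟨s, hs⟩ := h
          have hs' : t + t = 2 ^ m * s + 2 ^ m * s := by rw [hs]; ring
          exact ⟨s, by omega⟩
        obtain ⟨s, hs⟩ := (ih t).mpr ht
        exact ⟨s * u, by rw [pow_succ, hs]; ring⟩
    · constructor
      · intro h
        have h2 : 2 ∣ ∑ i ∈ Finset.range T, a ^ i :=
          dvd_trans (dvd_pow_self 2 (Nat.succ_ne_zero m)) h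
        have hp := geomsum_mod_two a T ha2
        obtain ⟨t, rfl⟩ := ho
        omega
      · intro h
        have h2 : 2 ∣ T := dvd_trans (dvd_pow_self 2 (Nat.succ_ne_zero m)) h
        obtain ⟨t, rfl⟩ := ho
        omega

/-- Hull–Dobell theorem for modulus `2^m`: if `a ≡ 1 (mod 4)` and `c` is odd, the LCG
`x_{k+1} = a·x_k + c (mod 2^m)` has period exactly `2^m`. -/
theorem lcg_full_period (m : ℕ) (hm : 1 ≤ m) (a c : ℕ) (ha : a % 4 = 1) (hc : Odd c)
    (x : ℕ → ZMod (2 ^ m)) (hrec : ∀ k, x (k + 1) = a * x k + c) :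
    IsLeast {T : ℕ | 0 < T ∧ ∀ k, x (k + T) = x k} (2 ^ m) := by
  have hformula : ∀ k T, x (k + T)
      = (a : ZMod (2 ^ m)) ^ T * x k
        + (c : ZMod (2 ^ m)) * (∑ i ∈ Finset.range T, (a : ZMod (2 ^ m)) ^ i) := by
    intro k T
    induction T with
    | zero => simp
    | succ n ih =>
      rw [← Nat.add_assoc, hrec, ih, geom_sum_succ]
      ring
  have hcast : ∀ T, ((∑ i ∈ Finset.range T, a ^ i : ℕ) : ZMod (2 ^ m))
      = ∑ i ∈ Finset.range T, (a : ZMod (2 ^ m)) ^ i := by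
    intro T; push_cast; ring
  constructor
  · refine ⟨Nat.pow_pos (by norm_num), ?_⟩
    intro k
    have hdvd : 2 ^ m ∣ ∑ i ∈ Finset.range (2 ^ m), a ^ i := (key a ha m (2 ^ m)).mpr dvd_rfl
    have hS0 : (∑ i ∈ Finset.range (2 ^ m), (a : ZMod (2 ^ m)) ^ i) = 0 := by
      rw [← hcast]
      exact (ZMod.natCast_eq_zero_iff _ _).mpr hdvd
    have hge : (a : ZMod (2 ^ m)) ^ (2 ^ m) = 1 := by
      have h := geom_sum_mul (a : ZMod (2 ^ m)) (2 ^ m)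
      rw [hS0, zero_mul] at h
      linear_combination -h
    rw [hformula k (2 ^ m), hge, hS0]
    ring
  · intro T hT
    obtain ⟨hTpos, hper⟩ := hT
    have h0 := hper 0
    rw [hformula 0 T] at h0
    have hgeo := geom_sum_mul (a : ZMod (2 ^ m)) T
    have hST : (∑ i ∈ Finset.range T, (a : ZMod (2 ^ m)) ^ i)
        * (((a : ZMod (2 ^ m)) - 1) * x 0 + c) = 0 := by
      have hpow : (a : ZMod (2 ^ m)) ^ T
          = (∑ i ∈ Finset.range T, (a : ZMod (2 ^ m)) ^ i) * ((a : ZMod (2 ^ m)) - 1) + 1 := by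
        linear_combination -hgeo
      rw [hpow] at h0
      linear_combination h0
    have ha1 : 1 ≤ a := by omega
    have hu : IsUnit (((a : ZMod (2 ^ m)) - 1) * x 0 + c) := by
      haveI : NeZero (2 ^ m) := ⟨pow_ne_zero m two_ne_zero⟩
      have hx0 : ((ZMod.val (x 0) : ℕ) : ZMod (2 ^ m)) = x 0 := by
        simp [ZMod.natCast_val, ZMod.cast_id]
      have hrepr : ((a : ZMod (2 ^ m)) - 1) * x 0 + c
          = (((a - 1) * ZMod.val (x 0) + c : ℕ) : ZMod (2 ^ m)) := by
        push_cast [Nat.cast_sub ha1]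
        rw [hx0]
      rw [hrepr, ZMod.isUnit_iff_coprime]
      have hodd : ((a - 1) * ZMod.val (x 0) + c) % 2 = 1 := by
        obtain ⟨d, rfl⟩ := hc
        have h4 : (a - 1) % 2 = 0 := by omega
        have h5 : ((a - 1) * ZMod.val (x 0)) % 2 = 0 := by
          rw [Nat.mul_mod, h4]; simp
        omega
      refine Nat.Coprime.pow_right _ ?_
      rw [Nat.coprime_two_right, Nat.odd_iff]
      exact hodd
    have hS0 : (∑ i ∈ Finset.range T, (a : ZMod (2 ^ m)) ^ i) = 0 := by
      exact hu.mul_left_eq_zero.mp hST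
    have hdvd : 2 ^ m ∣ ∑ i ∈ Finset.range T, a ^ i := by
      rw [← ZMod.natCast_eq_zero_iff, hcast]
      exact hS0
    exact Nat.le_of_dvd hTpos ((key a ha m T).mp hdvd)
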